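/- arXiv:2505.03291 — 2 statements merged into one kernel-verified Lean document; each statement's English description precedes it below -/
import Mathlib

section
/- In any Nash equilibrium (F_1, F_2) of the single-item all-pay auction with parameters (B_1, B_2, v_1, v_2), the suprema of the supports of the two players' strategies coincide and equal L: sup Supp(F_1) = sup Supp(F_2) = min{B_1, B_2, v_1, v_2}. -/
open MeasureTheory Set

noncomputable section

/-- `L = min {B₁, B₂, v₁, v₂}` for the single-item auction. -/
def Lval (B v : Fin 2 → ℝ) : ℝ := min (min (B 0) (B 1)) (min (v 0) (v 1))

/-- Probability that player `i` wins the single item when bidding `xi` while the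
opponent bids `xo`: the strictly higher bid wins; on a tie at
`min {B₁, B₂, v₁, v₂}` the player with the strictly larger `min {Bᵢ, vᵢ}` wins,
and all other ties are resolved by a fair coin. -/
def winProb (B v : Fin 2 → ℝ) (i : Fin 2) (xi xo : ℝ) : ℝ :=
  if xo < xi then 1
  else if xi < xo then 0
  else if xi = Lval B v ∧ min (B (1 - i)) (v (1 - i)) < min (B i) (v i) then 1
  else if xi = Lval B v ∧ min (B i) (v i) < min (B (1 - i)) (v (1 - i)) then 0
  else 1 / 2

/-- Expected utility of player `i` from the pure bids `xi` (own) and `xo` (opponent):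
he pays his bid in any case and receives `v i` with his winning probability. -/
def payoff (B v : Fin 2 → ℝ) (i : Fin 2) (xi xo : ℝ) : ℝ :=
  winProb B v i xi xo * v i - xi

/-- A mixed strategy of a player with budget `Bi`: a probability measure on `[0, Bi]`. -/
def IsStrategy (Bi : ℝ) (μ : Measure ℝ) : Prop :=
  IsProbabilityMeasure μ ∧ μ (Icc 0 Bi) = 1

/-- Expected utility of player `i` when he plays `μ` and the opponent plays `ν`. -/
def expUtil (B v : Fin 2 → ℝ) (i : Fin 2) (μ ν : Measure ℝ) : ℝ :=
  ∫ xi, (∫ xo, payoff B v i xi xo ∂ν) ∂μ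

/-- `(F 0, F 1)` is a (mixed) Nash equilibrium of the single-item all-pay auction. -/
def IsNash (B v : Fin 2 → ℝ) (F : Fin 2 → Measure ℝ) : Prop :=
  (∀ i, IsStrategy (B i) (F i)) ∧
  ∀ i, ∀ μ, IsStrategy (B i) μ →
    expUtil B v i μ (F (1 - i)) ≤ expUtil B v i (F i) (F (1 - i))

/-- The (topological) support of a mixed strategy. -/
def supp (μ : Measure ℝ) : Set ℝ := {x | ∀ U ∈ nhds x, μ U ≠ 0}

/-! ### Generic support lemmas -/

lemma supp_compl_null (μ : Measure ℝ) : μ (supp μ)ᶜ = 0 := by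
  have h : ∀ x : ((supp μ)ᶜ : Set ℝ), ∃ U : Set ℝ, IsOpen U ∧ (x : ℝ) ∈ U ∧ μ U = 0 := by
    rintro ⟨x, hx⟩
    simp only [supp, mem_compl_iff, mem_setOf_eq, not_forall] at hx
    obtain ⟨U, hU, hU0⟩ := hx
    rw [not_ne_iff] at hU0
    obtain ⟨V, hVU, hVopen, hxV⟩ := mem_nhds_iff.mp hU
    exact ⟨V, hVopen, hxV, measure_mono_null hVU hU0⟩
  choose U hUo hxU hU0 using h
  rcases TopologicalSpace.isOpen_iUnion_countable U hUo with ⟨T, hTc, hT⟩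
  have hcover : ((supp μ)ᶜ : Set ℝ) ⊆ ⋃ i ∈ T, U i := by
    rw [hT]
    intro x hx
    exact mem_iUnion.mpr ⟨⟨x, hx⟩, hxU _⟩
  refine measure_mono_null hcover ?_
  exact (measure_biUnion_null_iff hTc).mpr fun i _ => hU0 i

lemma isClosed_supp (μ : Measure ℝ) : IsClosed (supp μ) := by
  rw [← isOpen_compl_iff, isOpen_iff_mem_nhds]
  intro x hx
  simp only [supp, mem_compl_iff, mem_setOf_eq, not_forall] at hx
  obtain ⟨W, hW, hW0⟩ := hx
  rw [not_ne_iff] at hW0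
  obtain ⟨V, hVW, hVopen, hxV⟩ := mem_nhds_iff.mp hW
  have : V ⊆ (supp μ)ᶜ := by
    intro y hy hys
    exact hys V (hVopen.mem_nhds hy) (measure_mono_null hVW hW0)
  exact mem_nhds_iff.mpr ⟨V, this, hVopen, hxV⟩

lemma supp_subset_compl {μ : Measure ℝ} {E : Set ℝ} (hE : IsOpen E) (h0 : μ E = 0) :
    supp μ ⊆ Eᶜ := fun _x hx hxE => hx E (hE.mem_nhds hxE) h0

lemma supp_nonempty (μ : Measure ℝ) [IsProbabilityMeasure μ] : (supp μ).Nonempty := by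
  by_contra h
  rw [not_nonempty_iff_eq_empty] at h
  have h2 := supp_compl_null μ
  rw [h, compl_empty, measure_univ] at h2
  exact one_ne_zero h2

lemma measure_supp (μ : Measure ℝ) [IsProbabilityMeasure μ] : μ (supp μ) = 1 := by
  have := (prob_compl_eq_zero_iff (isClosed_supp μ).measurableSet).mp (supp_compl_null μ)
  exact this

lemma supp_subset_Icc {μ : Measure ℝ} [IsProbabilityMeasure μ] {a b : ℝ}
    (h : μ (Icc a b) = 1) : supp μ ⊆ Icc a b := by
  have h0 : μ (Icc a b)ᶜ = 0 := (prob_compl_eq_zero_iff measurableSet_Icc).mpr h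
  have := supp_subset_compl (isClosed_Icc (a := a) (b := b)).isOpen_compl h0
  rwa [compl_compl] at this

lemma sSup_supp_le {μ : Measure ℝ} {b : ℝ} (hne : (supp μ).Nonempty)
    (h : μ (Ioi b) = 0) : sSup (supp μ) ≤ b := by
  refine csSup_le hne fun x hx => ?_
  by_contra hxb
  exact hx (Ioi b) (isOpen_Ioi.mem_nhds (not_le.mp hxb)) h

/-! ### The tie value and the winning-probability function -/

def tval (B v : Fin 2 → ℝ) (i : Fin 2) (x : ℝ) : ℝ :=
  if x = Lval B v ∧ min (B (1 - i)) (v (1 - i)) < min (B i) (v i) then 1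
  else if x = Lval B v ∧ min (B i) (v i) < min (B (1 - i)) (v (1 - i)) then 0
  else 1 / 2

lemma tval_nonneg (B v : Fin 2 → ℝ) (i : Fin 2) (x : ℝ) : 0 ≤ tval B v i x := by
  unfold tval; split_ifs <;> norm_num

lemma tval_le_one (B v : Fin 2 → ℝ) (i : Fin 2) (x : ℝ) : tval B v i x ≤ 1 := by
  unfold tval; split_ifs <;> norm_num

lemma tval_eq_half (B v : Fin 2 → ℝ) (i : Fin 2) {x : ℝ} (h : x ≠ Lval B v) :
    tval B v i x = 1 / 2 := by
  unfold tval
  rw [if_neg (fun hc => h hc.1), if_neg (fun hc => h hc.1)]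

lemma winProb_eq (B v : Fin 2 → ℝ) (i : Fin 2) (xi xo : ℝ) :
    winProb B v i xi xo =
      (Iio xi).indicator (fun _ => (1 : ℝ)) xo
        + tval B v i xi * ({xi} : Set ℝ).indicator (fun _ => (1 : ℝ)) xo := by
  unfold winProb tval
  rcases lt_trichotomy xo xi with h | h | h
  · rw [if_pos h, indicator_of_mem (mem_Iio.2 h),
      indicator_of_notMem (by simpa using ne_of_lt h)]
    ring
  · subst h
    rw [if_neg (lt_irrefl _), if_neg (lt_irrefl _),
      indicator_of_notMem (by simp), indicator_of_mem (mem_singleton _)]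
    split_ifs <;> ring
  · rw [if_neg (asymm h), if_pos h, indicator_of_notMem (by simpa using not_lt.mpr h.le),
      indicator_of_notMem (by simpa using (ne_of_gt h))]
    ring

/-- Win probability of player `i` bidding `x` against mixed strategy `ν`. -/
def Wv (B v : Fin 2 → ℝ) (i : Fin 2) (ν : Measure ℝ) (x : ℝ) : ℝ :=
  (ν (Iio x)).toReal + tval B v i x * (ν {x}).toReal

lemma integrable_winProb (B v : Fin 2 → ℝ) (i : Fin 2) (ν : Measure ℝ) [IsFiniteMeasure ν]
    (xi : ℝ) : Integrable (fun xo => winProb B v i xi xo) ν := by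
  have he : (fun xo => winProb B v i xi xo) =
      fun xo => (Iio xi).indicator (fun _ => (1 : ℝ)) xo
        + tval B v i xi * ({xi} : Set ℝ).indicator (fun _ => (1 : ℝ)) xo :=
    funext (winProb_eq B v i xi)
  rw [he]
  exact ((integrable_const (1 : ℝ)).indicator measurableSet_Iio).add
    (((integrable_const (1 : ℝ)).indicator (measurableSet_singleton xi)).const_mul _)

lemma integral_winProb (B v : Fin 2 → ℝ) (i : Fin 2) (ν : Measure ℝ) [IsFiniteMeasure ν]
    (xi : ℝ) : ∫ xo, winProb B v i xi xo ∂ν = Wv B v i ν xi := by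
  simp_rw [winProb_eq B v i xi]
  rw [integral_add ((integrable_const (1 : ℝ)).indicator measurableSet_Iio)
    ((((integrable_const (1 : ℝ)).indicator (measurableSet_singleton xi))).const_mul _),
    integral_const_mul, integral_indicator_const _ measurableSet_Iio,
    integral_indicator_const _ (measurableSet_singleton xi)]
  simp [Wv, Measure.real]

lemma integral_payoff (B v : Fin 2 → ℝ) (i : Fin 2) (ν : Measure ℝ) [IsProbabilityMeasure ν]
    (xi : ℝ) : ∫ xo, payoff B v i xi xo ∂ν = v i * Wv B v i ν xi - xi := by
  unfold payoff
  rw [integral_sub ((integrable_winProb B v i ν xi).mul_const _) (integrable_const _),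
    integral_const, integral_mul_const, integral_winProb, probReal_univ]
  simp [mul_comm]

lemma Wv_nonneg (B v : Fin 2 → ℝ) (i : Fin 2) (ν : Measure ℝ) (x : ℝ) : 0 ≤ Wv B v i ν x :=
  add_nonneg ENNReal.toReal_nonneg (mul_nonneg (tval_nonneg B v i x) ENNReal.toReal_nonneg)

lemma Wv_le_Iic (B v : Fin 2 → ℝ) (i : Fin 2) (ν : Measure ℝ) [IsFiniteMeasure ν] (x : ℝ) :
    Wv B v i ν x ≤ (ν (Iic x)).toReal := by
  have hm : ν (Iio x) + ν {x} = ν (Iic x) := by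
    rw [← measure_union (by simp) (measurableSet_singleton x), Iio_union_right]
  calc Wv B v i ν x ≤ (ν (Iio x)).toReal + 1 * (ν {x}).toReal := by
        unfold Wv
        have := tval_le_one B v i x
        nlinarith [ENNReal.toReal_nonneg (a := ν {x})]
    _ = ((ν (Iio x)) + ν {x}).toReal := by
        rw [ENNReal.toReal_add (measure_ne_top _ _) (measure_ne_top _ _)]; ring
    _ = (ν (Iic x)).toReal := by rw [hm]

lemma Wv_le_one (B v : Fin 2 → ℝ) (i : Fin 2) (ν : Measure ℝ) [IsProbabilityMeasure ν] (x : ℝ) :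
    Wv B v i ν x ≤ 1 := by
  refine (Wv_le_Iic B v i ν x).trans ?_
  have := prob_le_one (μ := ν) (s := Iic x)
  simpa using ENNReal.toReal_mono (by simp) this

/-- The expected payoff of a pure bid `x` against the mixed strategy `ν`. -/
def gfun (B v : Fin 2 → ℝ) (i : Fin 2) (ν : Measure ℝ) (x : ℝ) : ℝ :=
  v i * Wv B v i ν x - x

lemma expUtil_eq (B v : Fin 2 → ℝ) (i : Fin 2) (μ ν : Measure ℝ) [IsProbabilityMeasure ν] :
    expUtil B v i μ ν = ∫ x, gfun B v i ν x ∂μ := by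
  unfold expUtil
  congr 1
  funext x
  rw [integral_payoff B v i ν x]
  rfl

lemma measurable_tval (B v : Fin 2 → ℝ) (i : Fin 2) : Measurable (tval B v i) := by
  have he : tval B v i = fun x =>
      if x = Lval B v then tval B v i (Lval B v) else 1 / 2 := by
    funext x
    by_cases hx : x = Lval B v
    · subst hx; simp
    · rw [if_neg hx, tval_eq_half B v i hx]
  rw [he]
  exact Measurable.ite (by simpa [setOf_eq_eq_singleton] using
    (measurableSet_singleton (Lval B v))) measurable_const measurable_const

lemma measurable_gfun (B v : Fin 2 → ℝ) (i : Fin 2) (ν : Measure ℝ) [IsFiniteMeasure ν] :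
    Measurable (gfun B v i ν) := by
  have h1 : Measurable fun x => (ν (Iio x)).toReal := by
    refine Monotone.measurable fun a b hab => ?_
    exact ENNReal.toReal_mono (measure_ne_top _ _) (measure_mono (Iio_subset_Iio hab))
  have h2 : Measurable fun x => (ν (Iic x)).toReal := by
    refine Monotone.measurable fun a b hab => ?_
    exact ENNReal.toReal_mono (measure_ne_top _ _) (measure_mono (Iic_subset_Iic.mpr hab))
  have hatom : (fun x => (ν {x}).toReal) =
      fun x => (ν (Iic x)).toReal - (ν (Iio x)).toReal := by
    funext x
    have hm : ν (Iio x) + ν {x} = ν (Iic x) := by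
      rw [← measure_union (by simp) (measurableSet_singleton x), Iio_union_right]
    rw [← hm, ENNReal.toReal_add (measure_ne_top _ _) (measure_ne_top _ _)]
    ring
  have h3 : Measurable fun x => (ν {x}).toReal := by rw [hatom]; exact h2.sub h1
  unfold gfun Wv
  exact ((h1.add ((measurable_tval B v i).mul h3)).const_mul _).sub measurable_id

lemma integrable_gfun {B v : Fin 2 → ℝ} (i : Fin 2) {μ : Measure ℝ} [IsProbabilityMeasure μ]
    (hμ : μ (Icc 0 (B i)) = 1) (ν : Measure ℝ) [IsProbabilityMeasure ν] :
    Integrable (gfun B v i ν) μ := by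
  refine Integrable.mono' (integrable_const (|v i| + B i))
    (measurable_gfun B v i ν).aestronglyMeasurable ?_
  have hae : ∀ᵐ x ∂μ, x ∈ Icc 0 (B i) := by
    rw [ae_iff]
    have : {x | ¬x ∈ Icc 0 (B i)} = (Icc 0 (B i))ᶜ := rfl
    rw [this]
    exact (prob_compl_eq_zero_iff measurableSet_Icc).mpr hμ
  filter_upwards [hae] with x hx
  have h0 := Wv_nonneg B v i ν x
  have h1 := Wv_le_one B v i ν x
  rw [Real.norm_eq_abs, gfun]
  have habs : |v i * Wv B v i ν x| ≤ |v i| := by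
    rw [abs_mul]
    nlinarith [abs_nonneg (v i), abs_nonneg (Wv B v i ν x), abs_of_nonneg h0]
  have hxabs : |x| ≤ B i := by
    rw [abs_of_nonneg hx.1]; exact hx.2
  calc |v i * Wv B v i ν x - x| ≤ |v i * Wv B v i ν x| + |x| := abs_sub _ _
    _ ≤ |v i| + B i := add_le_add habs hxabs

/-! ### The key deviation lemma -/

lemma integrable_dirac' {g : ℝ → ℝ} (hg : Measurable g) (b : ℝ) :
    Integrable g (Measure.dirac b) := by
  refine Integrable.mono' (integrable_const |g b|) hg.aestronglyMeasurable ?_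
  rw [ae_dirac_iff (measurableSet_le (by measurability) measurable_const)]
  simp [Real.norm_eq_abs]

section Nash

variable {B v : Fin 2 → ℝ} {F : Fin 2 → Measure ℝ}

/-- Moving the mass of a set where the expected payoff is worse (by `δ`) than at a feasible
bid `b` would strictly improve: in equilibrium such a set is null. -/
lemma no_bad (hN : IsNash B v F) (i : Fin 2) {b δ : ℝ} (hb : b ∈ Icc 0 (B i)) (hδ : 0 < δ) :
    F i {x | gfun B v i (F (1 - i)) x + δ ≤ gfun B v i (F (1 - i)) b} = 0 := by
  haveI h1 : IsProbabilityMeasure (F i) := (hN.1 i).1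
  haveI h2 : IsProbabilityMeasure (F (1 - i)) := (hN.1 (1 - i)).1
  have hIcc : F i (Icc 0 (B i)) = 1 := (hN.1 i).2
  set ν := F (1 - i) with hν
  set g := gfun B v i ν with hg
  have hgm : Measurable g := measurable_gfun B v i ν
  set S := {x | g x + δ ≤ g b} with hS
  have hSm : MeasurableSet S := measurableSet_le (hgm.add measurable_const) measurable_const
  by_contra hne
  set μ := F i with hμdef
  set p := μ S with hp
  have hpt : p ≠ ⊤ := measure_ne_top μ S
  have hc : μ Sᶜ = 1 - p := by
    rw [measure_compl hSm (measure_ne_top _ _), measure_univ]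
  set μ' : Measure ℝ := μ.restrict Sᶜ + p • Measure.dirac b with hμ'
  have huniv : μ' univ = 1 := by
    rw [hμ', Measure.add_apply, Measure.restrict_apply MeasurableSet.univ, univ_inter,
      Measure.smul_apply, Measure.dirac_apply' b MeasurableSet.univ, hc]
    simp only [mem_univ, indicator_of_mem, smul_eq_mul, mul_one, Pi.one_apply]
    exact tsub_add_cancel_of_le prob_le_one
  haveI : IsProbabilityMeasure μ' := ⟨huniv⟩
  have hstrat : IsStrategy (B i) μ' := by
    refine ⟨this, ?_⟩
    rw [hμ', Measure.add_apply, Measure.restrict_apply measurableSet_Icc,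
      Measure.smul_apply, Measure.dirac_apply' b measurableSet_Icc]
    have hci : μ (Icc 0 (B i) ∩ Sᶜ) = μ Sᶜ := by
      refine le_antisymm (measure_mono inter_subset_right) ?_
      have : μ (Sᶜ \ (Icc 0 (B i) ∩ Sᶜ)) = 0 := by
        refine measure_mono_null (fun x hx => ?_) ((prob_compl_eq_zero_iff measurableSet_Icc).mpr hIcc)
        rcases hx with ⟨hx1, hx2⟩
        intro hxI
        exact hx2 ⟨hxI, hx1⟩
      calc μ Sᶜ ≤ μ (Icc 0 (B i) ∩ Sᶜ) + μ (Sᶜ \ (Icc 0 (B i) ∩ Sᶜ)) := by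
            refine le_trans (measure_mono ?_) (measure_union_le _ _)
            intro x hx
            by_cases hxm : x ∈ Icc 0 (B i) ∩ Sᶜ
            · exact Or.inl hxm
            · exact Or.inr ⟨hx, hxm⟩
        _ = μ (Icc 0 (B i) ∩ Sᶜ) := by rw [this, add_zero]
    rw [hci, hc, indicator_of_mem hb]
    simp only [Pi.one_apply, smul_eq_mul, mul_one]
    exact tsub_add_cancel_of_le prob_le_one
  have hNle := hN.2 i μ' hstrat
  rw [← hν, ← hμdef] at hNle
  have hint : Integrable g μ := integrable_gfun i hIcc ν
  have hEμ : expUtil B v i μ ν = ∫ x, g x ∂μ := expUtil_eq B v i μ ν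
  have hEμ' : expUtil B v i μ' ν = (∫ x in Sᶜ, g x ∂μ) + p.toReal * g b := by
    rw [expUtil_eq B v i μ' ν, hμ', integral_add_measure hint.restrict
      ((integrable_dirac' hgm b).smul_measure hpt), integral_smul_measure,
      integral_dirac g b]
    rfl
  have hsplit : ∫ x, g x ∂μ = (∫ x in S, g x ∂μ) + ∫ x in Sᶜ, g x ∂μ :=
    (integral_add_compl hSm hint).symm
  have hSle : ∫ x in S, g x ∂μ ≤ p.toReal * (g b - δ) := by
    have := setIntegral_mono_on hint.integrableOn (integrable_const (g b - δ)).integrableOn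
      hSm (fun x hx => by simpa using (by linarith [mem_setOf_eq ▸ hx] : g x ≤ g b - δ))
    simpa [setIntegral_const, smul_eq_mul, Measure.real] using this
  have hppos : 0 < p.toReal := ENNReal.toReal_pos hne hpt
  have : expUtil B v i μ ν < expUtil B v i μ' ν := by
    rw [hEμ, hEμ', hsplit]
    have : p.toReal * (g b - δ) < p.toReal * g b := by nlinarith
    linarith
  linarith

/-- Almost surely, the bids played are at least as good as any feasible pure bid. -/
lemma ae_ge (hN : IsNash B v F) (i : Fin 2) {b : ℝ} (hb : b ∈ Icc 0 (B i)) :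
    ∀ᵐ x ∂(F i), gfun B v i (F (1 - i)) b ≤ gfun B v i (F (1 - i)) x := by
  rw [ae_iff]
  set g := gfun B v i (F (1 - i)) with hg
  have hsub : {x | ¬g b ≤ g x} ⊆ ⋃ n : ℕ, {x | g x + 1 / (n + 1) ≤ g b} := by
    intro x hx
    rw [mem_setOf_eq, not_le] at hx
    obtain ⟨n, hn⟩ := exists_nat_one_div_lt (sub_pos.mpr hx)
    exact mem_iUnion.mpr ⟨n, by simp only [mem_setOf_eq]; push_cast; linarith⟩
  exact measure_mono_null hsub
    (measure_iUnion_null fun n => no_bad hN i hb (by positivity))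

end Nash

/-! ### Geometry of equilibrium supports -/

lemma Lval_le_B (B v : Fin 2 → ℝ) (i : Fin 2) : Lval B v ≤ B i := by
  fin_cases i
  · exact le_trans (min_le_left _ _) (min_le_left _ _)
  · exact le_trans (min_le_left _ _) (min_le_right _ _)

lemma Lval_le_v (B v : Fin 2 → ℝ) (i : Fin 2) : Lval B v ≤ v i := by
  fin_cases i
  · exact le_trans (min_le_right _ _) (min_le_left _ _)
  · exact le_trans (min_le_right _ _) (min_le_right _ _)

lemma fin2_sub_sub (i : Fin 2) : 1 - (1 - i) = i := by fin_cases i <;> rfl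

section Nash2

variable {B v : Fin 2 → ℝ} {F : Fin 2 → Measure ℝ}

lemma supp_Icc (hN : IsNash B v F) (i : Fin 2) : supp (F i) ⊆ Icc 0 (B i) := by
  haveI : IsProbabilityMeasure (F i) := (hN.1 i).1
  exact supp_subset_Icc (hN.1 i).2

lemma supp_ne (hN : IsNash B v F) (i : Fin 2) : (supp (F i)).Nonempty := by
  haveI : IsProbabilityMeasure (F i) := (hN.1 i).1
  exact supp_nonempty (F i)

lemma supp_bddAbove (hN : IsNash B v F) (i : Fin 2) : BddAbove (supp (F i)) :=
  BddAbove.mono (supp_Icc hN i) bddAbove_Icc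

lemma supp_bddBelow (hN : IsNash B v F) (i : Fin 2) : BddBelow (supp (F i)) :=
  BddBelow.mono (supp_Icc hN i) bddBelow_Icc

lemma sSup_supp_mem (hN : IsNash B v F) (i : Fin 2) : sSup (supp (F i)) ∈ supp (F i) :=
  (isClosed_supp (F i)).csSup_mem (supp_ne hN i) (supp_bddAbove hN i)

lemma sInf_supp_mem (hN : IsNash B v F) (i : Fin 2) : sInf (supp (F i)) ∈ supp (F i) :=
  (isClosed_supp (F i)).csInf_mem (supp_ne hN i) (supp_bddBelow hN i)

lemma sSup_supp_nonneg (hN : IsNash B v F) (i : Fin 2) : 0 ≤ sSup (supp (F i)) :=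
  (supp_Icc hN i (sSup_supp_mem hN i)).1

lemma sInf_supp_nonneg (hN : IsNash B v F) (i : Fin 2) : 0 ≤ sInf (supp (F i)) :=
  (supp_Icc hN i (sInf_supp_mem hN i)).1

lemma sSup_supp_le_B (hN : IsNash B v F) (i : Fin 2) : sSup (supp (F i)) ≤ B i :=
  (supp_Icc hN i (sSup_supp_mem hN i)).2

lemma sInf_le_sSup_supp (hN : IsNash B v F) (i : Fin 2) :
    sInf (supp (F i)) ≤ sSup (supp (F i)) :=
  csInf_le_csSup (supp_ne hN i) (supp_bddBelow hN i) (supp_bddAbove hN i)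

lemma sSup_supp_le_v (hB : ∀ i, 0 ≤ B i) (hv : ∀ i, 0 < v i) (hN : IsNash B v F)
    (i : Fin 2) : sSup (supp (F i)) ≤ v i := by
  haveI : IsProbabilityMeasure (F i) := (hN.1 i).1
  haveI : IsProbabilityMeasure (F (1 - i)) := (hN.1 (1 - i)).1
  have h0 : (0 : ℝ) ∈ Icc 0 (B i) := ⟨le_refl _, hB i⟩
  have hg0 : 0 ≤ gfun B v i (F (1 - i)) 0 := by
    unfold gfun
    have := Wv_nonneg B v i (F (1 - i)) 0
    nlinarith [(hv i).le]
  have hae : ∀ᵐ x ∂(F i), x ≤ v i := by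
    filter_upwards [ae_ge hN i h0] with x hx
    have hW := Wv_le_one B v i (F (1 - i)) x
    have : gfun B v i (F (1 - i)) x ≤ v i - x := by
      unfold gfun
      nlinarith [(hv i).le]
    linarith
  have hnull : F i (Ioi (v i)) = 0 := by
    rw [ae_iff] at hae
    convert hae using 2
    ext x; simp
  exact sSup_supp_le (supp_ne hN i) hnull

lemma opp_Iio_one (hN : IsNash B v F) (i : Fin 2) {b : ℝ}
    (hb : sSup (supp (F (1 - i))) < b) : F (1 - i) (Iio b) = 1 := by
  haveI : IsProbabilityMeasure (F (1 - i)) := (hN.1 (1 - i)).1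
  refine le_antisymm prob_le_one ?_
  rw [← measure_supp (F (1 - i))]
  refine measure_mono fun x hx => ?_
  exact lt_of_le_of_lt (le_csSup (supp_bddAbove hN (1 - i)) hx) hb

lemma g_top (hN : IsNash B v F) (i : Fin 2) {b : ℝ}
    (hb : sSup (supp (F (1 - i))) < b) : gfun B v i (F (1 - i)) b = v i - b := by
  haveI : IsProbabilityMeasure (F (1 - i)) := (hN.1 (1 - i)).1
  have h1 : F (1 - i) (Iio b) = 1 := opp_Iio_one hN i hb
  have h2 : F (1 - i) {b} = 0 := by
    have hcompl : F (1 - i) (Iio b)ᶜ = 0 := (prob_compl_eq_zero_iff measurableSet_Iio).mpr h1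
    exact measure_mono_null (by intro x hx; simp_all) hcompl
  unfold gfun Wv
  rw [h1, h2]
  simp

lemma sup_le_of_gt (hB : ∀ i, 0 ≤ B i) (hv : ∀ i, 0 < v i) (hN : IsNash B v F)
    (i : Fin 2) {b : ℝ} (hb0 : 0 ≤ b) (hbB : b ≤ B i)
    (hb : sSup (supp (F (1 - i))) < b) : sSup (supp (F i)) ≤ b := by
  haveI : IsProbabilityMeasure (F i) := (hN.1 i).1
  haveI : IsProbabilityMeasure (F (1 - i)) := (hN.1 (1 - i)).1
  have hae : ∀ᵐ x ∂(F i), x ≤ b := by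
    filter_upwards [ae_ge hN i ⟨hb0, hbB⟩] with x hx
    rw [g_top hN i hb] at hx
    have hW := Wv_le_one B v i (F (1 - i)) x
    have : gfun B v i (F (1 - i)) x ≤ v i - x := by
      unfold gfun
      nlinarith [(hv i).le]
    linarith
  have hnull : F i (Ioi b) = 0 := by
    rw [ae_iff] at hae
    convert hae using 2
    ext x; simp
  exact sSup_supp_le (supp_ne hN i) hnull

lemma sup_opp_le (hB : ∀ i, 0 ≤ B i) (hv : ∀ i, 0 < v i) (hN : IsNash B v F)
    (i : Fin 2) : sSup (supp (F i)) ≤ sSup (supp (F (1 - i))) := by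
  set Mj := sSup (supp (F (1 - i))) with hMj
  rcases le_or_gt (B i) Mj with h | h
  · exact le_trans (sSup_supp_le_B hN i) h
  · by_contra hcon
    push_neg at hcon
    set Mi := sSup (supp (F i)) with hMi
    set b := min ((Mj + Mi) / 2) (B i) with hbdef
    have hMj0 : 0 ≤ Mj := sSup_supp_nonneg hN (1 - i)
    have hb : Mj < b := lt_min (by linarith) h
    have hble : Mi ≤ b :=
      sup_le_of_gt hB hv hN i (le_trans hMj0 hb.le) (min_le_right _ _) hb
    have : b ≤ (Mj + Mi) / 2 := min_le_left _ _
    linarith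

end Nash2

/-! ### The bottom of the supports (case `M < L`) -/

lemma le_of_seq {c d x : ℝ} (hd : 0 < d) (h : ∀ n : ℕ, c - d / (n + 1) ≤ x) : c ≤ x := by
  by_contra hc
  push_neg at hc
  obtain ⟨n, hn⟩ := exists_nat_one_div_lt (div_pos (sub_pos.mpr hc) hd)
  have h2 : d / (n + 1) < c - x := by
    calc d / (n + 1) = d * (1 / (n + 1)) := by ring
      _ < d * ((c - x) / d) := mul_lt_mul_of_pos_left hn hd
      _ = c - x := by field_simp
  linarith [h n]

section Nash3

variable {B v : Fin 2 → ℝ} {F : Fin 2 → Measure ℝ}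

lemma ae_linear (hB : ∀ i, 0 ≤ B i) (hv : ∀ i, 0 < v i) (hN : IsNash B v F)
    (i : Fin 2) (hM : sSup (supp (F (1 - i))) < Lval B v) :
    ∀ᵐ x ∂(F i),
      v i - sSup (supp (F (1 - i))) + x ≤ v i * (F (1 - i) (Iic x)).toReal := by
  haveI : IsProbabilityMeasure (F i) := (hN.1 i).1
  haveI : IsProbabilityMeasure (F (1 - i)) := (hN.1 (1 - i)).1
  set M := sSup (supp (F (1 - i))) with hMdef
  set d := Lval B v - M with hd
  have hdpos : 0 < d := sub_pos.mpr hM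
  have hM0 : 0 ≤ M := sSup_supp_nonneg hN (1 - i)
  have hbmem : ∀ n : ℕ, M + d / (n + 1) ∈ Icc 0 (B i) := by
    intro n
    constructor
    · positivity
    · have h1 : d / (n + 1) ≤ d := by
        apply div_le_self hdpos.le
        simp
      have := Lval_le_B B v i
      simp only [hd] at h1 ⊢
      linarith
  have haeall : ∀ᵐ x ∂(F i), ∀ n : ℕ,
      gfun B v i (F (1 - i)) (M + d / (n + 1)) ≤ gfun B v i (F (1 - i)) x := by
    rw [ae_all_iff]
    intro n
    exact ae_ge hN i (hbmem n)
  filter_upwards [haeall] with x hx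
  have hgx : v i - M ≤ gfun B v i (F (1 - i)) x := by
    refine le_of_seq hdpos fun n => ?_
    have hbig : M < M + d / (n + 1) := by
      have : (0:ℝ) < d / (n + 1) := by positivity
      linarith
    have := hx n
    rw [g_top hN i hbig] at this
    linarith
  have hWle := Wv_le_Iic B v i (F (1 - i)) x
  have : gfun B v i (F (1 - i)) x ≤ v i * (F (1 - i) (Iic x)).toReal - x := by
    unfold gfun
    nlinarith [(hv i).le]
  linarith

lemma null_below_inf (hN : IsNash B v F) (i : Fin 2) :
    F i (Iio (sInf (supp (F i)))) = 0 := by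
  refine measure_mono_null (fun x hx => ?_) (supp_compl_null (F i))
  intro hxs
  exact absurd (csInf_le (supp_bddBelow hN i) hxs) (not_le.mpr hx)

lemma inf_supp_le (hB : ∀ i, 0 ≤ B i) (hv : ∀ i, 0 < v i) (hN : IsNash B v F)
    (i : Fin 2) (hM : sSup (supp (F i)) < Lval B v) :
    sInf (supp (F i)) ≤ sInf (supp (F (1 - i))) := by
  haveI : IsProbabilityMeasure (F i) := (hN.1 i).1
  haveI : IsProbabilityMeasure (F (1 - i)) := (hN.1 (1 - i)).1
  set s := sInf (supp (F i)) with hs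
  set j := 1 - i with hj
  have hji : 1 - j = i := by rw [hj, fin2_sub_sub]
  -- the a.e. linear lower bound for player j, whose opponent is i
  have hae := ae_linear hB hv hN j (by rwa [hji])
  rw [hji] at hae
  have hinull : F i (Iio s) = 0 := null_below_inf hN i
  have hae0 : ∀ᵐ x ∂(F j), x ∈ Icc 0 (B j) := by
    rw [ae_iff]
    have : {x | ¬x ∈ Icc 0 (B j)} = (Icc 0 (B j))ᶜ := rfl
    rw [this]
    exact (prob_compl_eq_zero_iff measurableSet_Icc).mpr (hN.1 j).2
  have haekey : ∀ᵐ x ∂(F j), ¬ x < s := by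
    filter_upwards [hae, hae0] with x hx hx0
    intro hxs
    have hIic : F i (Iic x) = 0 :=
      measure_mono_null (fun y hy => lt_of_le_of_lt hy hxs) hinull
    rw [hIic] at hx
    simp only [ENNReal.toReal_zero, mul_zero] at hx
    have h1 : Lval B v ≤ v j := Lval_le_v B v j
    have h2 : sSup (supp (F i)) < Lval B v := hM
    have h3 : 0 ≤ x := hx0.1
    linarith
  have hnull : F j (Iio s) = 0 := by
    rw [ae_iff] at haekey
    convert haekey using 2
    ext x; simp
  have hsub : supp (F j) ⊆ (Iio s)ᶜ := supp_subset_compl isOpen_Iio hnull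
  refine le_csInf (supp_ne hN j) fun x hx => ?_
  exact not_lt.mp (hsub hx)

end Nash3

section Nash4

variable {B v : Fin 2 → ℝ} {F : Fin 2 → Measure ℝ}

/-- If the common supremum is below `L`, the opponent has an atom at the common infimum. -/
lemma atom_at_inf (hB : ∀ i, 0 ≤ B i) (hv : ∀ i, 0 < v i) (hN : IsNash B v F)
    (i : Fin 2) (hM : sSup (supp (F (1 - i))) < Lval B v)
    (hs : sInf (supp (F i)) ≤ sInf (supp (F (1 - i)))) :
    v i - sSup (supp (F (1 - i))) + sInf (supp (F i))
      ≤ v i * (F (1 - i) {sInf (supp (F i))}).toReal := by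
  haveI : IsProbabilityMeasure (F i) := (hN.1 i).1
  haveI : IsProbabilityMeasure (F (1 - i)) := (hN.1 (1 - i)).1
  set M := sSup (supp (F (1 - i))) with hMdef
  set s := sInf (supp (F i)) with hsdef
  set ν := F (1 - i) with hν
  have hνio : ν (Iio s) = 0 :=
    measure_mono_null (fun y (hy : y < s) => lt_of_lt_of_le hy hs)
      (null_below_inf hN (1 - i))
  -- step (a): for each t > s there is a point of `Ico s t` where the linear bound holds
  have hae := ae_linear hB hv hN i hM
  have hstep : ∀ t, s < t → v i - M + s ≤ v i * (ν (Iic t)).toReal := by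
    intro t ht
    have hex : ∃ x, x ∈ Ico s t ∧
        v i - M + x ≤ v i * (ν (Iic x)).toReal := by
      by_contra hcon
      push_neg at hcon
      have hsub : Ico s t ⊆ {x | ¬ (v i - M + x ≤ v i * (ν (Iic x)).toReal)} :=
        fun x hx => not_le.mpr (hcon x hx)
      have h0 : F i (Ico s t) = 0 := by
        refine measure_mono_null hsub ?_
        rw [← ae_iff] ; exact hae
      have hopen : F i (Ioo (s - 1) t) ≠ 0 :=
        (sInf_supp_mem hN i) (Ioo (s - 1) t)
          (isOpen_Ioo.mem_nhds ⟨by linarith, ht⟩)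
      have : F i (Ioo (s - 1) t) ≤ F i (Iio s) + F i (Ico s t) := by
        refine le_trans (measure_mono ?_) (measure_union_le _ _)
        intro x hx
        rcases lt_or_ge x s with h | h
        · exact Or.inl h
        · exact Or.inr ⟨h, hx.2⟩
      rw [h0, null_below_inf hN i, add_zero] at this
      exact hopen (le_antisymm this (zero_le))
    obtain ⟨x, hx, hrel⟩ := hex
    have h1 : v i * (ν (Iic x)).toReal ≤ v i * (ν (Iic t)).toReal := by
      have := ENNReal.toReal_mono (measure_ne_top ν _)
        (measure_mono (Iic_subset_Iic.mpr hx.2.le))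
      nlinarith [(hv i).le]
    linarith [hx.1]
  -- step (b): pass to the limit t ↓ s
  have hlim : Filter.Tendsto (fun n : ℕ => (ν (Iic (s + 1 / (n + 1)))).toReal)
      Filter.atTop (nhds ((ν (Iic s)).toReal)) := by
    have hint : ⋂ n : ℕ, Iic (s + 1 / ((n : ℝ) + 1)) = Iic s := by
      ext x
      simp only [mem_iInter, mem_Iic]
      constructor
      · intro hx
        by_contra hxs
        push_neg at hxs
        obtain ⟨n, hn⟩ := exists_nat_one_div_lt (sub_pos.mpr hxs)
        linarith [hx n]
      · intro hx n
        have : (0:ℝ) ≤ 1 / ((n:ℝ) + 1) := by positivity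
        linarith
    have hanti : Antitone fun n : ℕ => Iic (s + 1 / ((n : ℝ) + 1)) := by
      intro m n hmn
      apply Iic_subset_Iic.mpr
      have : 1 / ((n : ℝ) + 1) ≤ 1 / ((m : ℝ) + 1) := by
        apply one_div_le_one_div_of_le (by positivity)
        exact_mod_cast add_le_add_left (Nat.cast_le.mpr hmn) 1
      linarith
    have ht := tendsto_measure_iInter_atTop
      (fun n => measurableSet_Iic.nullMeasurableSet) hanti
      ⟨0, measure_ne_top ν _⟩
    rw [hint] at ht
    exact (ENNReal.tendsto_toReal_iff (fun n => measure_ne_top ν _)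
      (measure_ne_top ν _)).mpr ht
  have hlim2 : v i - M + s ≤ v i * (ν (Iic s)).toReal := by
    refine ge_of_tendsto' (hlim.const_mul (v i)) fun n => ?_
    refine hstep _ ?_
    have : (0:ℝ) < 1 / ((n:ℝ) + 1) := by positivity
    linarith
  -- step (c): Iic s has the same measure as {s}
  have hsing : ν (Iic s) = ν {s} := by
    refine le_antisymm ?_ (measure_mono (by simp))
    have : Iic s ⊆ Iio s ∪ {s} := fun x hx => by
      rcases lt_or_eq_of_le (mem_Iic.mp hx) with h | h
      · exact Or.inl h
      · exact Or.inr (by simp [h])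
    calc ν (Iic s) ≤ ν (Iio s) + ν {s} := le_trans (measure_mono this) (measure_union_le _ _)
      _ = ν {s} := by rw [hνio, zero_add]
  rwa [hsing] at hlim2

end Nash4

section Nash5

variable {B v : Fin 2 → ℝ} {F : Fin 2 → Measure ℝ}

/-- Two players cannot both have an atom at a common point below `L`. -/
lemma no_shared_atom (hv : ∀ i, 0 < v i) (hN : IsNash B v F) (i : Fin 2) {s : ℝ}
    (hs0 : 0 ≤ s) (hsL : s < Lval B v) (hio : F (1 - i) (Iio s) = 0)
    (ha : F (1 - i) {s} ≠ 0) (hai : F i {s} ≠ 0) : False := by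
  haveI : IsProbabilityMeasure (F (1 - i)) := (hN.1 (1 - i)).1
  set ν := F (1 - i) with hν
  set a := (ν {s}).toReal with hadef
  have hapos : 0 < a := ENNReal.toReal_pos ha (measure_ne_top _ _)
  have hvi := hv i
  set ε := min (v i * a / 4) ((Lval B v - s) / 2) with hεdef
  have hεpos : 0 < ε := lt_min (by positivity) (by linarith)
  set b := s + ε with hbdef
  have hbB : b ≤ B i := by
    have h1 : ε ≤ (Lval B v - s) / 2 := min_le_right _ _
    have := Lval_le_B B v i
    simp only [hbdef]
    linarith
  have hb : b ∈ Icc 0 (B i) := ⟨by linarith, hbB⟩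
  have hgs : gfun B v i ν s = v i * (1 / 2 * a) - s := by
    unfold gfun Wv
    rw [hio, tval_eq_half B v i (ne_of_lt hsL)]
    simp [hadef]
  have hgb : v i * a - b ≤ gfun B v i ν b := by
    have h1 : a ≤ (ν (Iio b)).toReal := by
      refine ENNReal.toReal_mono (measure_ne_top _ _) (measure_mono ?_)
      intro x hx
      rw [mem_singleton_iff] at hx
      subst hx
      simp only [mem_Iio, hbdef]
      linarith
    have h2 : (ν (Iio b)).toReal ≤ Wv B v i ν b := by
      unfold Wv
      have := mul_nonneg (tval_nonneg B v i b) (ENNReal.toReal_nonneg (a := ν {b}))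
      linarith
    unfold gfun
    nlinarith
  set δ := v i * a / 4 with hδdef
  have hδpos : 0 < δ := by positivity
  have hkey : gfun B v i ν s + δ ≤ gfun B v i ν b := by
    have h1 : ε ≤ v i * a / 4 := min_le_left _ _
    rw [hgs]
    have : v i * (1 / 2 * a) - s + δ ≤ v i * a - b := by
      simp only [hbdef, hδdef]
      nlinarith
    linarith [hgb]
  have h0 := no_bad hN i hb hδpos
  rw [← hν] at h0
  have : F i {s} ≤ F i {x | gfun B v i ν x + δ ≤ gfun B v i ν b} := by
    refine measure_mono ?_
    intro x hx
    rw [mem_singleton_iff] at hx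
    subst hx
    exact hkey
  rw [h0] at this
  exact hai (le_antisymm this (zero_le))

end Nash5

/-- In any Nash equilibrium of the single-item all-pay auction, the suprema of the
supports of both players' strategies coincide and equal `L = min {B₁, B₂, v₁, v₂}`. -/
theorem support_sup_eq_L (B v : Fin 2 → ℝ) (hB : ∀ i, 0 ≤ B i) (hv : ∀ i, 0 < v i)
    (F : Fin 2 → Measure ℝ) (hN : IsNash B v F) :
    ∀ i, sSup (supp (F i)) = Lval B v := by
  intro i
  have h1 : sSup (supp (F i)) ≤ sSup (supp (F (1 - i))) := sup_opp_le hB hv hN i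
  have h2 : sSup (supp (F (1 - i))) ≤ sSup (supp (F i)) := by
    have := sup_opp_le hB hv hN (1 - i)
    rwa [fin2_sub_sub] at this
  have heq : sSup (supp (F (1 - i))) = sSup (supp (F i)) := le_antisymm h2 h1
  have hkcase : ∀ k : Fin 2, k = i ∨ k = 1 - i := by
    intro k
    fin_cases i <;> fin_cases k <;> simp
  have hBk : ∀ k, sSup (supp (F i)) ≤ B k := by
    intro k
    rcases hkcase k with h | h
    · rw [h]; exact sSup_supp_le_B hN i
    · rw [h, ← heq]; exact sSup_supp_le_B hN (1 - i)
  have hvk : ∀ k, sSup (supp (F i)) ≤ v k := by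
    intro k
    rcases hkcase k with h | h
    · rw [h]; exact sSup_supp_le_v hB hv hN i
    · rw [h, ← heq]; exact sSup_supp_le_v hB hv hN (1 - i)
  have hMle : sSup (supp (F i)) ≤ Lval B v :=
    le_min (le_min (hBk 0) (hBk 1)) (le_min (hvk 0) (hvk 1))
  by_contra hne
  have hlt : sSup (supp (F i)) < Lval B v := lt_of_le_of_ne hMle hne
  have hltj : sSup (supp (F (1 - i))) < Lval B v := by rw [heq]; exact hlt
  -- the infima agree
  have hi1 : sInf (supp (F i)) ≤ sInf (supp (F (1 - i))) := inf_supp_le hB hv hN i hlt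
  have hi2 : sInf (supp (F (1 - i))) ≤ sInf (supp (F i)) := by
    have := inf_supp_le hB hv hN (1 - i) hltj
    rwa [fin2_sub_sub] at this
  have hseq : sInf (supp (F i)) = sInf (supp (F (1 - i))) := le_antisymm hi1 hi2
  set s := sInf (supp (F i)) with hsdef
  have hs0 : 0 ≤ s := sInf_supp_nonneg hN i
  have hsL : s < Lval B v := lt_of_le_of_lt (sInf_le_sSup_supp hN i) hlt
  -- both players have an atom at `s`
  have hatomj := atom_at_inf hB hv hN i hltj (le_of_eq hseq)
  have hatomi' := atom_at_inf hB hv hN (1 - i) (by rwa [fin2_sub_sub]) (by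
    rw [fin2_sub_sub]; exact hi2)
  rw [fin2_sub_sub] at hatomi'
  rw [← hseq] at hatomi'
  have haj : F (1 - i) {s} ≠ 0 := by
    intro h0
    rw [h0] at hatomj
    simp only [ENNReal.toReal_zero, mul_zero] at hatomj
    have := Lval_le_v B v i
    linarith
  have hai : F i {s} ≠ 0 := by
    intro h0
    rw [h0] at hatomi'
    simp only [ENNReal.toReal_zero, mul_zero] at hatomi'
    have := Lval_le_v B v (1 - i)
    have h3 : 0 ≤ sInf (supp (F (1 - i))) := sInf_supp_nonneg hN (1 - i)
    linarith
  have hio : F (1 - i) (Iio s) = 0 := by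
    rw [hseq]
    exact null_below_inf hN (1 - i)
  exact no_shared_atom hv hN i hs0 hsL hio haj hai
end
end

section
/- Let (F_1, F_2) be a Nash equilibrium of the single-item all-pay auction with parameters (B_1, B_2, v_1, v_2). If inf Supp(F_1) < sup Supp(F_1) and inf Supp(F_2) < sup Supp(F_2), then inf Supp(F_1) = inf Supp(F_2) = 0. -/
open MeasureTheory Set

noncomputable section

namespace APA

lemma fin2 : ∀ i : Fin 2, 1 - (1 - i) = i := by decide

variable {B v : Fin 2 → ℝ}

lemma winProb_nonneg (B v : Fin 2 → ℝ) (i : Fin 2) (xi xo : ℝ) : 0 ≤ winProb B v i xi xo := by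
  unfold winProb; split_ifs <;> norm_num

lemma winProb_le_one (B v : Fin 2 → ℝ) (i : Fin 2) (xi xo : ℝ) : winProb B v i xi xo ≤ 1 := by
  unfold winProb; split_ifs <;> norm_num

lemma winProb_eq (B v : Fin 2 → ℝ) (i : Fin 2) (x : ℝ) :
    (fun xo => winProb B v i x xo)
      = fun xo => (Iio x).indicator (fun _ => (1:ℝ)) xo
          + ({x} : Set ℝ).indicator (fun _ => winProb B v i x x) xo := by
  funext xo
  rcases lt_trichotomy xo x with h | h | h
  · rw [indicator_of_mem (show xo ∈ Iio x from h), indicator_of_notMem (by simp [h.ne] : xo ∉ ({x} : Set ℝ))]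
    unfold winProb; rw [if_pos h]; ring
  · subst h
    rw [indicator_of_notMem (by simp : xo ∉ Iio xo), indicator_of_mem (show xo ∈ ({xo} : Set ℝ) by simp)]
    ring
  · rw [indicator_of_notMem (by simp [not_lt.mpr h.le] : xo ∉ Iio x),
      indicator_of_notMem (by simp [h.ne'] : xo ∉ ({x} : Set ℝ))]
    unfold winProb; rw [if_neg (not_lt.mpr h.le), if_pos h]; ring

lemma measurable_winProb (i : Fin 2) (x : ℝ) : Measurable (fun xo => winProb B v i x xo) := by
  rw [winProb_eq]
  exact (measurable_const.indicator measurableSet_Iio).add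
    (measurable_const.indicator (measurableSet_singleton x))

lemma integrable_winProb (i : Fin 2) (x : ℝ) (ν : Measure ℝ) [IsFiniteMeasure ν] :
    Integrable (fun xo => winProb B v i x xo) ν := by
  refine ⟨(measurable_winProb i x).aestronglyMeasurable, ?_⟩
  refine HasFiniteIntegral.of_bounded (C := 1) (Filter.Eventually.of_forall fun xo => ?_)
  rw [Real.norm_eq_abs, abs_le]
  exact ⟨by linarith [winProb_nonneg B v i x xo], winProb_le_one B v i x xo⟩

lemma integral_winProb (i : Fin 2) (x : ℝ) (ν : Measure ℝ) [IsFiniteMeasure ν] :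
    ∫ xo, winProb B v i x xo ∂ν
      = (ν (Iio x)).toReal + winProb B v i x x * (ν {x}).toReal := by
  rw [show (fun xo => winProb B v i x xo) = _ from winProb_eq B v i x]
  rw [integral_add ((integrable_const _).indicator measurableSet_Iio)
    ((integrable_const _).indicator (measurableSet_singleton x)),
    integral_indicator_const _ measurableSet_Iio,
    integral_indicator_const _ (measurableSet_singleton x)]
  simp [mul_comm]
  rfl

end APA
namespace APA

/-- Expected utility of bidding `x` against opponent strategy `ν`. -/
def Uf (B v : Fin 2 → ℝ) (i : Fin 2) (ν : Measure ℝ) (x : ℝ) : ℝ :=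
  ∫ xo, payoff B v i x xo ∂ν

variable {B v : Fin 2 → ℝ}

lemma Uf_eq (i : Fin 2) (x : ℝ) (ν : Measure ℝ) [IsProbabilityMeasure ν] :
    Uf B v i ν x
      = ((ν (Iio x)).toReal + winProb B v i x x * (ν {x}).toReal) * v i - x := by
  unfold Uf payoff
  rw [integral_sub ((integrable_winProb i x ν).mul_const _) (integrable_const _),
    integral_mul_const, integral_winProb, integral_const]
  simp

lemma toReal_prob_le_one (ν : Measure ℝ) [IsProbabilityMeasure ν] (s : Set ℝ) :
    (ν s).toReal ≤ 1 := by
  have := prob_le_one (μ := ν) (s := s)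
  calc (ν s).toReal ≤ (1 : ENNReal).toReal := ENNReal.toReal_mono (by simp) this
    _ = 1 := by simp

lemma measure_Iic_split (ν : Measure ℝ) [IsFiniteMeasure ν] (x : ℝ) :
    (ν (Iic x)).toReal = (ν (Iio x)).toReal + (ν {x}).toReal := by
  rw [← Iio_union_right, measure_union (by simp) (measurableSet_singleton x),
    ENNReal.toReal_add (measure_ne_top _ _) (measure_ne_top _ _)]

lemma Uf_ge_neg (i : Fin 2) (x : ℝ) (ν : Measure ℝ) [IsProbabilityMeasure ν]
    (hv : 0 < v i) : -x ≤ Uf B v i ν x := by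
  rw [Uf_eq]
  have h1 : (0:ℝ) ≤ (ν (Iio x)).toReal + winProb B v i x x * (ν {x}).toReal := by
    have := winProb_nonneg B v i x x
    positivity
  nlinarith

lemma Uf_le_Iic (i : Fin 2) (x : ℝ) (ν : Measure ℝ) [IsProbabilityMeasure ν]
    (hv : 0 < v i) : Uf B v i ν x ≤ (ν (Iic x)).toReal * v i - x := by
  rw [Uf_eq, measure_Iic_split]
  have h1 := winProb_le_one B v i x x
  have h2 : (0:ℝ) ≤ (ν {x}).toReal := ENNReal.toReal_nonneg
  have h3 : winProb B v i x x * (ν {x}).toReal ≤ (ν {x}).toReal := by nlinarith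
  nlinarith [mul_le_mul_of_nonneg_right h3 hv.le]

lemma Uf_ge_Iio (i : Fin 2) (x : ℝ) (ν : Measure ℝ) [IsProbabilityMeasure ν]
    (hv : 0 < v i) : (ν (Iio x)).toReal * v i - x ≤ Uf B v i ν x := by
  rw [Uf_eq]
  have h1 := winProb_nonneg B v i x x
  have h2 : (0:ℝ) ≤ (ν {x}).toReal := ENNReal.toReal_nonneg
  have h3 : 0 ≤ winProb B v i x x * (ν {x}).toReal := mul_nonneg h1 h2
  nlinarith [mul_le_mul_of_nonneg_right h3 hv.le]

lemma winProb_self_le_half (i : Fin 2) (x : ℝ)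
    (h : ¬(x = Lval B v ∧ min (B (1-i)) (v (1-i)) < min (B i) (v i))) :
    winProb B v i x x ≤ 1/2 := by
  unfold winProb
  rw [if_neg (lt_irrefl x), if_neg (lt_irrefl x), if_neg h]
  split_ifs <;> norm_num

lemma winProb_self_unfav (i : Fin 2) (x : ℝ)
    (h : x = Lval B v ∧ min (B i) (v i) < min (B (1-i)) (v (1-i))) :
    winProb B v i x x = 0 := by
  unfold winProb
  rw [if_neg (lt_irrefl x), if_neg (lt_irrefl x),
    if_neg (fun hc => absurd hc.2 (not_lt.mpr h.2.le)), if_pos h]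

lemma Uf_le_half (i : Fin 2) (x : ℝ) (ν : Measure ℝ) [IsProbabilityMeasure ν] (hv : 0 < v i)
    (h : ¬(x = Lval B v ∧ min (B (1-i)) (v (1-i)) < min (B i) (v i))) :
    Uf B v i ν x ≤ ((ν (Iio x)).toReal + (ν {x}).toReal / 2) * v i - x := by
  rw [Uf_eq]
  have h1 := winProb_self_le_half (B := B) (v := v) i x h
  have h2 : (0:ℝ) ≤ (ν {x}).toReal := ENNReal.toReal_nonneg
  have h3 : winProb B v i x x * (ν {x}).toReal ≤ (ν {x}).toReal / 2 := by nlinarith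
  nlinarith [mul_le_mul_of_nonneg_right h3 hv.le]

lemma Uf_le_unfav (i : Fin 2) (x : ℝ) (ν : Measure ℝ) [IsProbabilityMeasure ν]
    (h : x = Lval B v ∧ min (B i) (v i) < min (B (1-i)) (v (1-i))) :
    Uf B v i ν x = (ν (Iio x)).toReal * v i - x := by
  rw [Uf_eq, winProb_self_unfav i x h]
  ring

lemma measurable_Uf (i : Fin 2) (ν : Measure ℝ) [IsProbabilityMeasure ν] :
    Measurable (Uf B v i ν) := by
  have h1 : Measurable (fun x => (ν (Iio x)).toReal) :=
    Monotone.measurable fun a b hab =>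
      ENNReal.toReal_mono (measure_ne_top _ _) (measure_mono (Iio_subset_Iio hab))
  have h2 : Measurable (fun x => (ν (Iic x)).toReal) :=
    Monotone.measurable fun a b hab =>
      ENNReal.toReal_mono (measure_ne_top _ _) (measure_mono (Iic_subset_Iic.mpr hab))
  have h3 : Measurable (fun x => (ν {x}).toReal) := by
    have : (fun x => (ν {x}).toReal) = fun x => (ν (Iic x)).toReal - (ν (Iio x)).toReal := by
      funext x; rw [measure_Iic_split]; ring
    rw [this]; exact h2.sub h1
  have h4 : Measurable (fun x => winProb B v i x x) := by
    have : (fun x => winProb B v i x x)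
        = fun x => if x = Lval B v then winProb B v i (Lval B v) (Lval B v) else 1/2 := by
      funext x
      by_cases hx : x = Lval B v
      · rw [if_pos hx, hx]
      · rw [if_neg hx]
        unfold winProb
        rw [if_neg (lt_irrefl x), if_neg (lt_irrefl x),
          if_neg (fun hc => hx hc.1), if_neg (fun hc => hx hc.1)]
    rw [this]
    exact Measurable.ite (by simpa using MeasurableSet.singleton (Lval B v)) measurable_const
      measurable_const
  have : Uf B v i ν
      = fun x => ((ν (Iio x)).toReal + winProb B v i x x * (ν {x}).toReal) * v i - x :=
    funext fun x => Uf_eq i x ν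
  rw [this]
  exact ((h1.add (h4.mul h3)).mul_const _).sub measurable_id

end APA
namespace APA

lemma isClosed_supp (μ : Measure ℝ) : IsClosed (supp μ) := by
  rw [← isOpen_compl_iff, isOpen_iff_mem_nhds]
  intro x hx
  simp only [supp, mem_compl_iff, mem_setOf_eq, not_forall] at hx
  obtain ⟨U, hU, hU0⟩ := hx
  have hU0' : μ U = 0 := by
    by_contra hc; exact hc (by tauto)
  obtain ⟨V, hVU, hVopen, hxV⟩ := mem_nhds_iff.mp hU
  refine Filter.mem_of_superset (hVopen.mem_nhds hxV) fun y hy => ?_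
  simp only [supp, mem_compl_iff, mem_setOf_eq, not_forall]
  exact ⟨V, hVopen.mem_nhds hy, fun hc => hc (measure_mono_null hVU hU0')⟩

lemma supp_compl_null (μ : Measure ℝ) : μ (supp μ)ᶜ = 0 := by
  obtain ⟨T, hTc, hTS, hT⟩ := TopologicalSpace.isOpen_sUnion_countable
    {U : Set ℝ | IsOpen U ∧ μ U = 0} (fun s hs => hs.1)
  have hsub : (supp μ)ᶜ ⊆ ⋃₀ {U : Set ℝ | IsOpen U ∧ μ U = 0} := by
    intro x hx
    simp only [supp, mem_compl_iff, mem_setOf_eq, not_forall] at hx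
    obtain ⟨U, hU, hU0⟩ := hx
    have hU0' : μ U = 0 := by by_contra hc; exact hc (by tauto)
    exact ⟨interior U, ⟨isOpen_interior, measure_mono_null interior_subset hU0'⟩,
      mem_interior_iff_mem_nhds.mpr hU⟩
  refine measure_mono_null hsub ?_
  rw [← hT, sUnion_eq_biUnion]
  exact (measure_biUnion_null_iff hTc).mpr fun s hs => (hTS hs).2

lemma mem_supp_of_atom {μ : Measure ℝ} {x : ℝ} (h : μ {x} ≠ 0) : x ∈ supp μ :=
  fun U hU h0 =>
    h (measure_mono_null (singleton_subset_iff.mpr (mem_of_mem_nhds hU)) h0)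

variable {Bi : ℝ} {μ : Measure ℝ}

lemma compl_Icc_null (hS : IsStrategy Bi μ) : μ (Icc 0 Bi)ᶜ = 0 := by
  have : IsProbabilityMeasure μ := hS.1
  rw [measure_compl measurableSet_Icc (measure_ne_top _ _), hS.2, measure_univ, tsub_self]

lemma supp_subset_Icc (hS : IsStrategy Bi μ) : supp μ ⊆ Icc 0 Bi := by
  intro x hx
  by_contra hxI
  exact hx (Icc 0 Bi)ᶜ ((isClosed_Icc.isOpen_compl).mem_nhds hxI) (compl_Icc_null hS)

lemma null_of_subset_compl_Icc (hS : IsStrategy Bi μ) {s : Set ℝ}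
    (h : s ⊆ (Icc 0 Bi)ᶜ) : μ s = 0 :=
  measure_mono_null h (compl_Icc_null hS)

lemma inf_supp_nonneg (hS : IsStrategy Bi μ) (hne : (supp μ).Nonempty) :
    0 ≤ sInf (supp μ) :=
  le_csInf hne fun x hx => (supp_subset_Icc hS hx).1

lemma bddBelow_supp (hS : IsStrategy Bi μ) : BddBelow (supp μ) :=
  ⟨0, fun x hx => (supp_subset_Icc hS hx).1⟩

lemma sup_supp_le (hS : IsStrategy Bi μ) (hne : (supp μ).Nonempty) :
    sSup (supp μ) ≤ Bi :=
  csSup_le hne fun x hx => (supp_subset_Icc hS hx).2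

lemma inf_supp_mem (hS : IsStrategy Bi μ) (hne : (supp μ).Nonempty) :
    sInf (supp μ) ∈ supp μ :=
  (isClosed_supp μ).csInf_mem hne (bddBelow_supp hS)

lemma Iio_inf_null (hS : IsStrategy Bi μ) : μ (Iio (sInf (supp μ))) = 0 := by
  refine measure_mono_null (fun x hx => ?_) (supp_compl_null μ)
  intro hxs
  exact absurd (csInf_le (bddBelow_supp hS) hxs) (not_le.mpr hx)

lemma Ico_inf_ne_zero (hS : IsStrategy Bi μ) (hne : (supp μ).Nonempty)
    {δ : ℝ} (hδ : 0 < δ) :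
    μ (Ico (sInf (supp μ)) (sInf (supp μ) + δ)) ≠ 0 := by
  set a := sInf (supp μ)
  intro h0
  have hnb : Ioo (a - 1) (a + δ) ∈ nhds a := Ioo_mem_nhds (by linarith) (by linarith)
  refine inf_supp_mem hS hne _ hnb ?_
  have hsub : Ioo (a - 1) (a + δ) ⊆ Iio a ∪ Ico a (a + δ) := by
    intro x hx
    rcases lt_or_ge x a with h | h
    · exact Or.inl h
    · exact Or.inr ⟨h, hx.2⟩
  exact measure_mono_null hsub (measure_union_null (Iio_inf_null hS) h0)

/-- Nonempty support from `sInf < sSup`. -/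
lemma supp_nonempty_of_lt {μ : Measure ℝ} (h : sInf (supp μ) < sSup (supp μ)) :
    (supp μ).Nonempty := by
  rcases eq_empty_or_nonempty (supp μ) with he | hne
  · rw [he] at h; simp [Real.sInf_empty, Real.sSup_empty] at h
  · exact hne

end APA
namespace APA

/-- Equilibrium payoff of player `i`. -/
def Pv (B v : Fin 2 → ℝ) (F : Fin 2 → Measure ℝ) (i : Fin 2) : ℝ :=
  expUtil B v i (F i) (F (1 - i))

variable {B v : Fin 2 → ℝ} {F : Fin 2 → Measure ℝ}

lemma prob_i (hN : IsNash B v F) (i : Fin 2) : IsProbabilityMeasure (F i) := (hN.1 i).1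

lemma Pv_eq (i : Fin 2) : Pv B v F i = ∫ x, Uf B v i (F (1 - i)) x ∂(F i) := rfl

lemma Uf_le_Pv (hN : IsNash B v F) (i : Fin 2) {x : ℝ} (hx : x ∈ Icc 0 (B i)) :
    Uf B v i (F (1 - i)) x ≤ Pv B v F i := by
  have hstrat : IsStrategy (B i) (Measure.dirac x) := by
    constructor
    · infer_instance
    · rw [Measure.dirac_apply' _ measurableSet_Icc, indicator_of_mem hx]; rfl
  have := hN.2 i (Measure.dirac x) hstrat
  rwa [expUtil, integral_dirac] at this

lemma integrable_Uf (hN : IsNash B v F) (hv : ∀ i, 0 < v i) (hB : ∀ i, 0 ≤ B i) (i : Fin 2) :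
    Integrable (Uf B v i (F (1 - i))) (F i) := by
  haveI := prob_i hN i
  haveI := prob_i hN (1 - i)
  refine ⟨(measurable_Uf i _).aestronglyMeasurable, ?_⟩
  refine HasFiniteIntegral.of_bounded (C := 2 * v i + B i) ?_
  have hmem : ∀ᵐ x ∂(F i), x ∈ Icc 0 (B i) := by
    rw [MeasureTheory.ae_iff]
    exact compl_Icc_null (hN.1 i)
  filter_upwards [hmem] with x hx
  rw [Real.norm_eq_abs, abs_le]
  have hle := Uf_le_Iic (B := B) i x (F (1 - i)) (hv i)
  have hge := Uf_ge_neg (B := B) i x (F (1 - i)) (hv i)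
  have h1 : (F (1 - i) (Iic x)).toReal ≤ 1 := toReal_prob_le_one _ _
  have h2 : (0:ℝ) ≤ (F (1 - i) (Iic x)).toReal := ENNReal.toReal_nonneg
  constructor
  · nlinarith [hx.1, hx.2, (hv i).le]
  · nlinarith [hx.1, hx.2, (hv i).le, mul_le_mul_of_nonneg_right h1 (hv i).le]

lemma Pv_nonneg (hN : IsNash B v F) (hv : ∀ i, 0 < v i) (hB : ∀ i, 0 ≤ B i) (i : Fin 2) :
    0 ≤ Pv B v F i := by
  haveI := prob_i hN (1 - i)
  have h0 := Uf_le_Pv hN i (x := 0) ⟨le_refl 0, hB i⟩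
  have := Uf_ge_neg (B := B) i 0 (F (1 - i)) (hv i)
  linarith

lemma opt_null (hN : IsNash B v F) (hv : ∀ i, 0 < v i) (hB : ∀ i, 0 ≤ B i) (i : Fin 2) :
    F i {x | Uf B v i (F (1 - i)) x < Pv B v F i} = 0 := by
  haveI := prob_i hN i
  haveI := prob_i hN (1 - i)
  have hmem : ∀ᵐ x ∂(F i), x ∈ Icc 0 (B i) := by
    rw [MeasureTheory.ae_iff]
    exact compl_Icc_null (hN.1 i)
  have hint := integrable_Uf hN hv hB i
  have hkey : (fun x => Pv B v F i - Uf B v i (F (1 - i)) x) =ᵐ[F i] 0 := by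
    rw [← integral_eq_zero_iff_of_nonneg_ae]
    · rw [integral_sub (integrable_const _) hint, integral_const]
      simp [Pv_eq]
    · filter_upwards [hmem] with x hx
      exact sub_nonneg.mpr (Uf_le_Pv hN i hx)
    · exact (integrable_const _).sub hint
  rw [Filter.EventuallyEq, MeasureTheory.ae_iff] at hkey
  refine measure_mono_null (fun x hx => ?_) hkey
  simp only [mem_setOf_eq] at hx ⊢
  intro hc
  simp only [Pi.zero_apply] at hc
  linarith

end APA
namespace APA

lemma rightcont (ν : Measure ℝ) [IsFiniteMeasure ν] (t : ℝ) {c : ℝ}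
    (hc : (ν (Iic t)).toReal < c) :
    ∃ δ > 0, (ν (Iic (t + δ))).toReal < c := by
  have hiInter : ⋂ n : ℕ, Iic (t + 1/(n+1)) = Iic t := by
    ext x
    simp only [mem_iInter, mem_Iic]
    constructor
    · intro h
      by_contra hx
      push_neg at hx
      obtain ⟨n, hn⟩ := exists_nat_one_div_lt (sub_pos.mpr hx)
      have := h n
      linarith
    · intro h n
      have : (0:ℝ) < 1/(n+1) := by positivity
      linarith
  have hmono : Antitone (fun n : ℕ => Iic (t + 1/((n:ℝ)+1))) := by
    intro m n hmn
    apply Iic_subset_Iic.mpr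
    have : (1:ℝ)/((n:ℝ)+1) ≤ 1/((m:ℝ)+1) := by
      apply one_div_le_one_div_of_le (by positivity)
      have := (Nat.cast_le (α := ℝ)).mpr hmn
      linarith
    linarith
  have htend := MeasureTheory.tendsto_measure_iInter_atTop (μ := ν)
    (fun n => measurableSet_Iic.nullMeasurableSet) hmono ⟨0, measure_ne_top _ _⟩
  rw [hiInter] at htend
  have hc0 : (0:ℝ) ≤ c := le_trans ENNReal.toReal_nonneg hc.le
  have hlt : ν (Iic t) < ENNReal.ofReal c :=
    (ENNReal.lt_ofReal_iff_toReal_lt (measure_ne_top _ _)).mpr hc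
  have hev := (tendsto_order.mp htend).2 _ hlt
  obtain ⟨n, hn⟩ := hev.exists
  refine ⟨1/((n:ℝ)+1), by positivity, ?_⟩
  exact (ENNReal.lt_ofReal_iff_toReal_lt (measure_ne_top _ _)).mp hn

variable {B v : Fin 2 → ℝ} {F : Fin 2 → Measure ℝ}

/-- Contradiction: player `i`'s support starts at `t > 0`, opponent has no atom at `t`,
and `i`'s payoff is at least `v i * ν(Iio t) - t/4`. -/
lemma noatom_contra (hN : IsNash B v F) (hv : ∀ i, 0 < v i) (hB : ∀ i, 0 ≤ B i) (i : Fin 2)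
    (hne : (supp (F i)).Nonempty) (ht0 : 0 < sInf (supp (F i)))
    (hatom : F (1 - i) {sInf (supp (F i))} = 0)
    (hpiv : (F (1 - i) (Iio (sInf (supp (F i))))).toReal * v i - sInf (supp (F i)) / 4
      ≤ Pv B v F i) : False := by
  haveI := prob_i hN i
  haveI := prob_i hN (1 - i)
  set t := sInf (supp (F i)) with hts
  set ν := F (1 - i)
  have hIic : (ν (Iic t)).toReal = (ν (Iio t)).toReal := by
    rw [measure_Iic_split, hatom]
    simp
  have hvi := hv i
  have hcc : (ν (Iic t)).toReal < (ν (Iio t)).toReal + t/(4 * v i) := by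
    rw [hIic]
    have : 0 < t/(4 * v i) := by positivity
    linarith
  obtain ⟨δ, hδ, hδlt⟩ := rightcont ν t hcc
  have hsub : Ico t (t + δ) ⊆ {x | Uf B v i ν x < Pv B v F i} := by
    intro x hx
    simp only [mem_setOf_eq]
    have h1 : Uf B v i ν x ≤ (ν (Iic x)).toReal * v i - x := Uf_le_Iic i x ν (hv i)
    have h2 : (ν (Iic x)).toReal ≤ (ν (Iic (t + δ))).toReal :=
      ENNReal.toReal_mono (measure_ne_top _ _) (measure_mono (Iic_subset_Iic.mpr hx.2.le))
    have h3 : (ν (Iic x)).toReal * v i ≤ ((ν (Iio t)).toReal + t/(4 * v i)) * v i := by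
      apply mul_le_mul_of_nonneg_right _ (hv i).le
      linarith
    have hvne : v i ≠ 0 := (hv i).ne'
    have h4 : ((ν (Iio t)).toReal + t/(4 * v i)) * v i
        = (ν (Iio t)).toReal * v i + t/4 := by
      field_simp
    have := hx.1
    linarith
  have := measure_mono_null hsub (opt_null hN hv hB i)
  exact Ico_inf_ne_zero (hN.1 i) hne hδ this

/-- Contradiction: opponent of `i` has no mass at or below `t > 0`, yet `i` has an atom at `t`. -/
lemma direct_contra (hN : IsNash B v F) (hv : ∀ i, 0 < v i) (hB : ∀ i, 0 ≤ B i) (i : Fin 2)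
    {t : ℝ} (ht0 : 0 < t) (hIic : F (1 - i) (Iic t) = 0) (hatom : F i {t} ≠ 0) : False := by
  haveI := prob_i hN (1 - i)
  have h1 : Uf B v i (F (1 - i)) t ≤ (F (1 - i) (Iic t)).toReal * v i - t :=
    Uf_le_Iic i t _ (hv i)
  rw [hIic] at h1
  simp only [ENNReal.toReal_zero, zero_mul, zero_sub] at h1
  have h2 := Pv_nonneg hN hv hB i
  have hsub : ({t} : Set ℝ) ⊆ {x | Uf B v i (F (1 - i)) x < Pv B v F i} := by
    intro x hx
    simp only [mem_singleton_iff] at hx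
    subst hx
    simp only [mem_setOf_eq]
    linarith
  exact hatom (measure_mono_null hsub (opt_null hN hv hB i))

/-- Contradiction: both players have an atom at `t > 0`, `t < B j`, and player `j`
has no mass below `t`. -/
lemma atom_contra (hN : IsNash B v F) (hv : ∀ i, 0 < v i) (hB : ∀ i, 0 ≤ B i) (j : Fin 2)
    {t : ℝ} (ht0 : 0 < t) (htB : t < B j) (hlow : F j (Iio t) = 0)
    (haj : F j {t} ≠ 0) (hao : F (1 - j) {t} ≠ 0) : False := by
  haveI := prob_i hN j
  haveI := prob_i hN (1 - j)
  haveI : IsProbabilityMeasure (F (1 - (1 - j))) := by rw [fin2 j]; exact prob_i hN j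
  by_cases hfav : t = Lval B v ∧ min (B (1 - j)) (v (1 - j)) < min (B j) (v j)
  · -- then the opponent `o = 1 - j` loses the tie for sure: bidding `t` earns `-t < 0`
    have hunfav : t = Lval B v
        ∧ min (B (1 - j)) (v (1 - j)) < min (B (1 - (1 - j))) (v (1 - (1 - j))) := by
      rw [fin2]; exact hfav
    have h1 : Uf B v (1 - j) (F (1 - (1 - j))) t
        = (F (1 - (1 - j)) (Iio t)).toReal * v (1 - j) - t :=
      Uf_le_unfav (1 - j) t _ hunfav
    rw [fin2, hlow] at h1
    simp only [ENNReal.toReal_zero, zero_mul, zero_sub] at h1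
    have h2 := Pv_nonneg hN hv hB (1 - j)
    have hsub : ({t} : Set ℝ) ⊆ {x | Uf B v (1 - j) (F (1 - (1 - j))) x < Pv B v F (1 - j)} := by
      intro x hx
      simp only [mem_singleton_iff] at hx
      subst hx
      simp only [mem_setOf_eq, fin2]
      linarith
    exact hao (measure_mono_null hsub (opt_null hN hv hB (1 - j)))
  · -- player `j` wins the tie with probability at most 1/2, deviating up is profitable
    have hvj := hv j
    set ν := F (1 - j)
    set A := (ν {t}).toReal with hA
    set m := (ν (Iio t)).toReal with hm
    have hApos : 0 < A := ENNReal.toReal_pos hao (measure_ne_top _ _)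
    set ε := min (v j * A / 4) (B j - t) with hε
    have hεpos : 0 < ε := lt_min (by positivity) (by linarith)
    have hεle : ε ≤ v j * A / 4 := min_le_left _ _
    have hxmem : t + ε ∈ Icc 0 (B j) := by
      constructor
      · linarith
      · have := min_le_right (v j * A / 4) (B j - t)
        rw [hε]
        linarith [min_le_right (v j * A / 4) (B j - t)]
    have hdev : (m + A) * v j - t - ε ≤ Uf B v j ν (t + ε) := by
      have h1 : (ν (Iio (t + ε))).toReal * v j - (t + ε) ≤ Uf B v j ν (t + ε) :=
        Uf_ge_Iio j (t + ε) ν (hv j)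
      have h2 : m + A ≤ (ν (Iio (t + ε))).toReal := by
        rw [hm, hA, ← measure_Iic_split]
        exact ENNReal.toReal_mono (measure_ne_top _ _)
          (measure_mono (fun x hx => mem_Iio.mpr
            (lt_of_le_of_lt (mem_Iic.mp hx) (by linarith : t < t + ε))))
      nlinarith [mul_le_mul_of_nonneg_right h2 (hv j).le]
    have htie : Uf B v j ν t ≤ (m + A / 2) * v j - t := by
      have := Uf_le_half j t ν (hv j) hfav
      rw [← hm, ← hA] at this
      linarith [this]
    have hPle := Uf_le_Pv hN j hxmem
    have hlt : Uf B v j ν t < Pv B v F j := by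
      have hv4 : 0 < v j * A / 4 := by positivity
      nlinarith [mul_le_mul_of_nonneg_right (le_refl (A/2)) (hv j).le]
    have hsub : ({t} : Set ℝ) ⊆ {x | Uf B v j ν x < Pv B v F j} := by
      intro x hx
      simp only [mem_singleton_iff] at hx
      subst hx
      exact hlt
    exact haj (measure_mono_null hsub (opt_null hN hv hB j))

end APA
namespace APA

variable {B v : Fin 2 → ℝ} {F : Fin 2 → Measure ℝ}

/-- The two infima cannot differ. -/
lemma lt_contra (hN : IsNash B v F) (hv : ∀ i, 0 < v i) (hB : ∀ i, 0 ≤ B i) (i : Fin 2)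
    (hsi : sInf (supp (F i)) < sSup (supp (F i)))
    (hso : sInf (supp (F (1 - i))) < sSup (supp (F (1 - i))))
    (hlt : sInf (supp (F i)) < sInf (supp (F (1 - i)))) : False := by
  haveI := prob_i hN i
  haveI := prob_i hN (1 - i)
  have hnei := supp_nonempty_of_lt hsi
  have hneo := supp_nonempty_of_lt hso
  set t := sInf (supp (F (1 - i))) with htdef
  set a := sInf (supp (F i)) with hadef
  have ha0 : 0 ≤ a := inf_supp_nonneg (hN.1 i) hnei
  have ht0 : 0 < t := lt_of_le_of_lt ha0 hlt
  have htBo : t ≤ B (1 - i) := le_trans hso.le (sup_supp_le (hN.1 (1 - i)) hneo)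
  have hoIio : F (1 - i) (Iio t) = 0 := Iio_inf_null (hN.1 (1 - i))
  have h0t : F i (Ioo 0 t) = 0 := by
    refine measure_mono_null (fun x hx => ?_) (opt_null hN hv hB i)
    simp only [mem_setOf_eq]
    have hle : Uf B v i (F (1 - i)) x ≤ (F (1 - i) (Iic x)).toReal * v i - x :=
      Uf_le_Iic i x _ (hv i)
    have h2 : F (1 - i) (Iic x) = 0 :=
      measure_mono_null
        (fun y hy => mem_Iio.mpr (lt_of_le_of_lt (mem_Iic.mp hy) hx.2)) hoIio
    rw [h2] at hle
    simp only [ENNReal.toReal_zero, zero_mul, zero_sub] at hle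
    have hp := Pv_nonneg hN hv hB i
    have hx1 := hx.1
    linarith
  have ha : a = 0 := by
    by_contra hane
    have hapos : 0 < a := lt_of_le_of_ne ha0 (Ne.symm hane)
    have hδ : (0:ℝ) < min (t - a) a := lt_min (by linarith) hapos
    have hsub : Ico a (a + min (t - a) a) ⊆ Ioo 0 t := by
      intro x hx
      refine ⟨by linarith [hx.1], ?_⟩
      have h2 := hx.2
      have h3 := min_le_left (t - a) a
      linarith
    exact Ico_inf_ne_zero (hN.1 i) hnei hδ (measure_mono_null hsub h0t)
  have hmem0 : (0:ℝ) ∈ supp (F i) := by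
    rw [← ha]; exact inf_supp_mem (hN.1 i) hnei
  have hIio0 : F i (Iio 0) = 0 :=
    null_of_subset_compl_Icc (hN.1 i) (fun x hx => fun hc => absurd hc.1 (not_le.mpr hx))
  have hm0 : F i {0} ≠ 0 := by
    intro hc
    have hnb : Ioo (-t) t ∈ nhds 0 := Ioo_mem_nhds (by linarith) ht0
    refine hmem0 _ hnb ?_
    have hsub : Ioo (-t) t ⊆ Iio 0 ∪ ({0} : Set ℝ) ∪ Ioo 0 t := by
      intro x hx
      rcases lt_trichotomy x 0 with h | h | h
      · exact Or.inl (Or.inl h)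
      · exact Or.inl (Or.inr h)
      · exact Or.inr ⟨h, hx.2⟩
    exact measure_mono_null hsub (measure_union_null (measure_union_null hIio0 hc) h0t)
  have hIio4 : (F i (Iio t)).toReal ≤ (F i (Iio (t/4))).toReal := by
    have hsub : Iio t ⊆ Iio (t/4) ∪ Ico (t/4) t := by
      intro x hx
      rcases lt_or_ge x (t/4) with h | h
      · exact Or.inl h
      · exact Or.inr ⟨h, hx⟩
    have hIco : F i (Ico (t/4) t) = 0 :=
      measure_mono_null (fun x hx => mem_Ioo.mpr ⟨by linarith [(mem_Ico.mp hx).1], (mem_Ico.mp hx).2⟩) h0t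
    calc (F i (Iio t)).toReal ≤ (F i (Iio (t/4) ∪ Ico (t/4) t)).toReal :=
        ENNReal.toReal_mono (measure_ne_top _ _) (measure_mono hsub)
      _ ≤ ((F i (Iio (t/4)) + F i (Ico (t/4) t))).toReal :=
        ENNReal.toReal_mono
          (ENNReal.add_ne_top.mpr ⟨measure_ne_top _ _, measure_ne_top _ _⟩)
          (measure_union_le _ _)
      _ = (F i (Iio (t/4))).toReal := by rw [hIco]; simp
  have hpiv : (F (1 - (1 - i)) (Iio t)).toReal * v (1 - i) - t / 4 ≤ Pv B v F (1 - i) := by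
    have h1 : Uf B v (1 - i) (F (1 - (1 - i))) (t/4) ≤ Pv B v F (1 - i) :=
      Uf_le_Pv hN (1 - i) (x := t/4) (mem_Icc.mpr ⟨by linarith, by linarith⟩)
    haveI : IsProbabilityMeasure (F (1 - (1 - i))) := by rw [fin2 i]; exact prob_i hN i
    have h2 : (F (1 - (1 - i)) (Iio (t/4))).toReal * v (1 - i) - t/4
        ≤ Uf B v (1 - i) (F (1 - (1 - i))) (t/4) := Uf_ge_Iio _ _ _ (hv _)
    rw [fin2] at h1 h2 ⊢
    have h3 : (F i (Iio t)).toReal * v (1 - i) ≤ (F i (Iio (t/4))).toReal * v (1 - i) :=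
      mul_le_mul_of_nonneg_right hIio4 (hv _).le
    linarith
  by_cases hFit : F i {t} = 0
  · refine noatom_contra hN hv hB (1 - i) hneo ?_ ?_ ?_
    · rw [← htdef]; exact ht0
    · rw [← htdef, fin2]; exact hFit
    · rw [← htdef]; exact hpiv
  · by_cases hFot : F (1 - i) {t} = 0
    · refine direct_contra hN hv hB i ht0 ?_ hFit
      have hsub : Iic t ⊆ Iio t ∪ ({t} : Set ℝ) := by
        intro x hx
        rcases lt_or_eq_of_le (mem_Iic.mp hx) with h | h
        · exact Or.inl h
        · exact Or.inr (by simp [h])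
      exact measure_mono_null hsub (measure_union_null hoIio hFot)
    · refine atom_contra hN hv hB (1 - i) ht0 ?_ hoIio hFot ?_
      · exact lt_of_lt_of_le hso (sup_supp_le (hN.1 (1 - i)) hneo)
      · rw [fin2]; exact hFit

/-- The common infimum cannot be positive. -/
lemma eq_contra (hN : IsNash B v F) (hv : ∀ i, 0 < v i) (hB : ∀ i, 0 ≤ B i)
    (hs0 : sInf (supp (F 0)) < sSup (supp (F 0)))
    (hs1 : sInf (supp (F 1)) < sSup (supp (F 1)))
    (heq : sInf (supp (F 0)) = sInf (supp (F 1)))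
    (ht0 : 0 < sInf (supp (F 0))) : False := by
  have hne0 := supp_nonempty_of_lt hs0
  have hne1 := supp_nonempty_of_lt hs1
  have h10 : (1 : Fin 2) - 0 = 1 := by decide
  have h11 : (1 : Fin 2) - 1 = 0 := by decide
  set t := sInf (supp (F 0)) with htdef
  have hIio0 : F 0 (Iio t) = 0 := Iio_inf_null (hN.1 0)
  have hIio1 : F 1 (Iio t) = 0 := by
    rw [heq]; exact Iio_inf_null (hN.1 1)
  have hpiv0 : (F (1 - 0) (Iio t)).toReal * v 0 - t / 4 ≤ Pv B v F 0 := by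
    rw [h10, hIio1]
    have := Pv_nonneg hN hv hB 0
    simp only [ENNReal.toReal_zero, zero_mul, zero_sub]
    linarith
  have hpiv1 : (F (1 - 1) (Iio t)).toReal * v 1 - t / 4 ≤ Pv B v F 1 := by
    rw [h11, hIio0]
    have := Pv_nonneg hN hv hB 1
    simp only [ENNReal.toReal_zero, zero_mul, zero_sub]
    linarith
  by_cases hF1t : F 1 {t} = 0
  · refine noatom_contra hN hv hB 0 hne0 ht0 ?_ ?_
    · rw [h10, ← htdef]; exact hF1t
    · rw [← htdef]; exact hpiv0
  · by_cases hF0t : F 0 {t} = 0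
    · refine noatom_contra hN hv hB 1 hne1 ?_ ?_ ?_
      · rw [← heq]; exact ht0
      · rw [h11, ← heq]; exact hF0t
      · rw [← heq]; exact hpiv1
    · refine atom_contra hN hv hB 0 ht0 ?_ hIio0 hF0t ?_
      · exact lt_of_lt_of_le hs0 (sup_supp_le (hN.1 0) hne0)
      · rw [h10]; exact hF1t

end APA


/-- In a Nash equilibrium, if both players' strategy supports have their infimum
strictly below their supremum, then both infima equal `0`. -/
theorem both_randomize_inf_zero (B v : Fin 2 → ℝ) (hB : ∀ i, 0 ≤ B i)
    (hv : ∀ i, 0 < v i) (F : Fin 2 → Measure ℝ) (hN : IsNash B v F)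
    (h1 : sInf (supp (F 0)) < sSup (supp (F 0)))
    (h2 : sInf (supp (F 1)) < sSup (supp (F 1))) :
    sInf (supp (F 0)) = 0 ∧ sInf (supp (F 1)) = 0 := by
  have h10 : (1 : Fin 2) - 0 = 1 := by decide
  have h11 : (1 : Fin 2) - 1 = 0 := by decide
  rcases lt_trichotomy (sInf (supp (F 0))) (sInf (supp (F 1))) with hlt | heq | hgt
  · exact absurd (APA.lt_contra hN hv hB 0 h1 (by rw [h10]; exact h2)
      (by rw [h10]; exact hlt)) not_false
  · have hnn : 0 ≤ sInf (supp (F 0)) :=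
      APA.inf_supp_nonneg (hN.1 0) (APA.supp_nonempty_of_lt h1)
    rcases eq_or_lt_of_le hnn with h0 | hpos
    · exact ⟨h0.symm, by rw [← heq]; exact h0.symm⟩
    · exact absurd (APA.eq_contra hN hv hB h1 h2 heq hpos) not_false
  · exact absurd (APA.lt_contra hN hv hB 1 h2 (by rw [h11]; exact h1)
      (by rw [h11]; exact hgt)) not_false
end
end
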